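/- Let $0<\alpha\le 1$, $K>0$, and let $\varphi:(-\tfrac32,\tfrac32)^{n-1}\to\mathbb{R}$ satisfy $|\varphi(x)-\varphi(y)|\le K|x-y|^\alpha$ and $2\le\varphi<3$. In the Whitney-type decomposition of $\Omega_\varphi=\{(x',x_n): x'\in(-\tfrac12,\tfrac12)^{n-1},\,0<x_n<\varphi(x')\}$ into dyadic cubes built level by level from the root cube $(-\tfrac12,\tfrac12)^{n-1}\times(0,1)$ (a cube of edge $2^{-j}$ either is translated upward unchanged, or is split into $2^{n-1}$ children of edge $2^{-j-1}$ when the tripled translated cube leaves the expanded domain), the number $\mathbb{P}_i(t)$ of cubes of edge $2^{-i}$ on the path from the root to any vertex $t$ satisfies $\mathbb{P}_i(t)\le C\,2^{i(1-\alpha)}$, with $C$ depending only on $n$, $\alpha$, and $K$. -/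

import Mathlib

open scoped Classical

noncomputable section

/-- `s ⪯ t` in the rooted tree with parent map `par`: `s` lies on the path from the root to `t`. -/
def treeLe {Γ : Type*} (par : Γ → Γ) (s t : Γ) : Prop := ∃ m : ℕ, par^[m] t = s

/-- The expanded Hölder graph domain `Ω_{φ,E}`. -/
def OmegaE (n : ℕ) (φ : (Fin (n - 1) → ℝ) → ℝ) : Set ((Fin (n - 1) → ℝ) × ℝ) :=
  {x | (∀ i, |x.1 i| < 3 / 2) ∧ 0 < x.2 ∧ x.2 < φ x.1}

/-- The tripled upward-translated cube `3(Q + ℓ eₙ)` of the cube with lower corner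
`(c, y)` and edge `ℓ`. -/
def tripled (n : ℕ) (c : Fin (n - 1) → ℝ) (y ℓ : ℝ) : Set ((Fin (n - 1) → ℝ) × ℝ) :=
  {x | (∀ i, c i - ℓ < x.1 i ∧ x.1 i < c i + 2 * ℓ) ∧ y < x.2 ∧ x.2 < y + 3 * ℓ}

/-- The Whitney-type tree decomposition of the Hölder graph domain
`Ω_φ = (-1/2,1/2)^{n-1} × (0,φ)`, built level by level from the root cube
`(-1/2,1/2)^{n-1} × (0,1)`: a cube either is translated upward unchanged (when the tripled
translated cube fits in the expanded domain `Ω_{φ,E}`) or is split into `2^{n-1}` children of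
half the edge length.  Each vertex `t` carries a cube of edge `2^{-lvl t}` with base lower
corner `corner t` and bottom height `height t`. -/
structure WhitneyTree (n : ℕ) (φ : (Fin (n - 1) → ℝ) → ℝ) where
  Γ : Type
  countable : Countable Γ
  a : Γ
  par : Γ → Γ
  par_root : par a = a
  reaches : ∀ t, ∃ m : ℕ, par^[m] t = a
  lvl : Γ → ℕ
  corner : Γ → Fin (n - 1) → ℝ
  height : Γ → ℝ
  lvl_root : lvl a = 0
  corner_root : ∀ i, corner a i = -(1 / 2)
  height_root : height a = 0
  child_translate : ∀ t, t ≠ a →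
    tripled n (corner (par t)) (height (par t)) ((2 : ℝ) ^ (-(lvl (par t) : ℤ))) ⊆ OmegaE n φ →
    lvl t = lvl (par t) ∧ corner t = corner (par t) ∧
      height t = height (par t) + (2 : ℝ) ^ (-(lvl (par t) : ℤ))
  child_split : ∀ t, t ≠ a →
    ¬ tripled n (corner (par t)) (height (par t)) ((2 : ℝ) ^ (-(lvl (par t) : ℤ))) ⊆ OmegaE n φ →
    lvl t = lvl (par t) + 1 ∧
      (∀ i, corner t i = corner (par t) i ∨
        corner t i = corner (par t) i + (2 : ℝ) ^ (-(lvl t : ℤ))) ∧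
      height t = height (par t) + (2 : ℝ) ^ (-(lvl (par t) : ℤ))
  below_graph : ∀ t (x' : Fin (n - 1) → ℝ),
    (∀ i, corner t i ≤ x' i ∧ x' i ≤ corner t i + (2 : ℝ) ^ (-(lvl t : ℤ))) →
    height t + (2 : ℝ) ^ (-(lvl t : ℤ)) ≤ φ x'
  cube_inj : ∀ s t, lvl s = lvl t → corner s = corner t → height s = height t → s = t

namespace WTaux

variable {n : ℕ} {φ : (Fin (n - 1) → ℝ) → ℝ} (T : WhitneyTree n φ)

lemma anc_ind (P : T.Γ → Prop) (h0 : P T.a)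
    (hstep : ∀ s, s ≠ T.a → P (T.par s) → P s) : ∀ s, P s := by
  have key : ∀ m s, T.par^[m] s = T.a → P s := by
    intro m
    induction m with
    | zero => intro s hs; simp at hs; rwa [hs]
    | succ m ih =>
      intro s hs
      by_cases h : s = T.a
      · rwa [h]
      · exact hstep s h (ih _ (by rwa [Function.iterate_succ_apply] at hs))
  intro s; obtain ⟨m, hm⟩ := T.reaches s; exact key m s hm

lemma step_height (s : T.Γ) (hs : s ≠ T.a) :
    T.height s = T.height (T.par s) + (2 : ℝ) ^ (-(T.lvl (T.par s) : ℤ)) := by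
  by_cases h : tripled n (T.corner (T.par s)) (T.height (T.par s))
      ((2 : ℝ) ^ (-(T.lvl (T.par s) : ℤ))) ⊆ OmegaE n φ
  · exact (T.child_translate s hs h).2.2
  · exact (T.child_split s hs h).2.2

lemma step_lvl (s : T.Γ) (hs : s ≠ T.a) :
    (T.lvl s = T.lvl (T.par s) ∧ T.corner s = T.corner (T.par s)) ∨
    (T.lvl s = T.lvl (T.par s) + 1 ∧
      ∀ i, T.corner s i = T.corner (T.par s) i ∨
        T.corner s i = T.corner (T.par s) i + (2 : ℝ) ^ (-(T.lvl s : ℤ))) := by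
  by_cases h : tripled n (T.corner (T.par s)) (T.height (T.par s))
      ((2 : ℝ) ^ (-(T.lvl (T.par s) : ℤ))) ⊆ OmegaE n φ
  · exact Or.inl ⟨(T.child_translate s hs h).1, (T.child_translate s hs h).2.1⟩
  · exact Or.inr ⟨(T.child_split s hs h).1, (T.child_split s hs h).2.1⟩

lemma lvl_par_le (s : T.Γ) : T.lvl (T.par s) ≤ T.lvl s := by
  by_cases hs : s = T.a
  · rw [hs, T.par_root]
  · rcases step_lvl T s hs with ⟨h, _⟩ | ⟨h, _⟩ <;> omega

lemma height_par_le (s : T.Γ) : T.height (T.par s) ≤ T.height s := by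
  by_cases hs : s = T.a
  · rw [hs, T.par_root]
  · rw [step_height T s hs]
    have : (0:ℝ) < (2 : ℝ) ^ (-(T.lvl (T.par s) : ℤ)) := by positivity
    linarith

lemma height_par_lt (s : T.Γ) (hs : s ≠ T.a) : T.height (T.par s) < T.height s := by
  rw [step_height T s hs]
  have : (0:ℝ) < (2 : ℝ) ^ (-(T.lvl (T.par s) : ℤ)) := by positivity
  linarith

lemma height_nonneg (s : T.Γ) : 0 ≤ T.height s := by
  refine anc_ind T (fun s => 0 ≤ T.height s) (by simp [T.height_root]) (fun s hs ih => ?_) s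
  exact le_trans ih (height_par_le T s)

lemma corner_mem (s : T.Γ) : ∀ i, -(1/2 : ℝ) ≤ T.corner s i ∧
    T.corner s i + (2 : ℝ) ^ (-(T.lvl s : ℤ)) ≤ 1/2 := by
  refine anc_ind T (fun s => ∀ i, -(1/2 : ℝ) ≤ T.corner s i ∧
      T.corner s i + (2 : ℝ) ^ (-(T.lvl s : ℤ)) ≤ 1/2) (fun i => ?_) (fun s hs ih i => ?_) s
  · rw [T.corner_root, T.lvl_root]; norm_num
  · rcases step_lvl T s hs with ⟨hl, hc⟩ | ⟨hl, hc⟩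
    · rw [hl, hc]; exact ih i
    · obtain ⟨h1, h2⟩ := ih i
      have e : (2 : ℝ) ^ (-(T.lvl (T.par s) : ℤ)) = 2 * (2 : ℝ) ^ (-(T.lvl s : ℤ)) := by
        rw [hl, show (-(T.lvl (T.par s) : ℤ)) = (-((T.lvl (T.par s) : ℤ) + 1)) + 1 by ring,
          zpow_add_one₀ (two_ne_zero)]
        push_cast; ring
      have hpos : (0:ℝ) < (2 : ℝ) ^ (-(T.lvl s : ℤ)) := by positivity
      rcases hc i with h | h <;> rw [h] <;> constructor <;> linarith [e ▸ h2]

lemma height_lattice (s : T.Γ) : ∃ j : ℕ, T.height s = j * (2 : ℝ) ^ (-(T.lvl s : ℤ)) := by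
  refine anc_ind T (fun s => ∃ j : ℕ, T.height s = j * (2 : ℝ) ^ (-(T.lvl s : ℤ)))
    ⟨0, by simp [T.height_root]⟩ (fun s hs ih => ?_) s
  obtain ⟨j, hj⟩ := ih
  rcases step_lvl T s hs with ⟨hl, _⟩ | ⟨hl, _⟩
  · exact ⟨j + 1, by rw [step_height T s hs, hj, hl]; push_cast; ring⟩
  · refine ⟨2 * j + 2, ?_⟩
    have e : (2 : ℝ) ^ (-(T.lvl (T.par s) : ℤ)) = 2 * (2 : ℝ) ^ (-(T.lvl s : ℤ)) := by
      rw [hl, show (-(T.lvl (T.par s) : ℤ)) = (-((T.lvl (T.par s) : ℤ) + 1)) + 1 by ring,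
        zpow_add_one₀ (two_ne_zero)]
      push_cast; ring
    rw [step_height T s hs, hj, e]; push_cast; ring

lemma height_anc_le (t : T.Γ) {m m'} (h : m ≤ m') :
    T.height (T.par^[m'] t) ≤ T.height (T.par^[m] t) := by
  obtain ⟨d, rfl⟩ := Nat.exists_eq_add_of_le h
  clear h
  induction d with
  | zero => simp
  | succ d ih =>
    rw [show m + (d+1) = (m+d) + 1 by ring, Function.iterate_succ_apply']
    exact le_trans (height_par_le T _) ih

lemma lvl_anc_le (t : T.Γ) {m m'} (h : m ≤ m') :
    T.lvl (T.par^[m'] t) ≤ T.lvl (T.par^[m] t) := by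
  obtain ⟨d, rfl⟩ := Nat.exists_eq_add_of_le h
  clear h
  induction d with
  | zero => simp
  | succ d ih =>
    rw [show m + (d+1) = (m+d) + 1 by ring, Function.iterate_succ_apply']
    exact le_trans (lvl_par_le T _) ih

lemma height_inj_aux (t : T.Γ) {m m'} (h : m ≤ m')
    (hh : T.height (T.par^[m'] t) = T.height (T.par^[m] t)) :
    T.par^[m'] t = T.par^[m] t := by
  obtain ⟨d, rfl⟩ := Nat.exists_eq_add_of_le h
  clear h
  induction d with
  | zero => simp
  | succ d ih =>
    rw [show m + (d+1) = (m+d) + 1 by ring, Function.iterate_succ_apply'] at hh ⊢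
    have h2 : T.height (T.par^[m+d] t) ≤ T.height (T.par^[m] t) :=
      height_anc_le T t (by omega)
    have ha : T.par^[m+d] t = T.a := by
      by_contra hne
      have := height_par_lt T _ hne
      linarith [hh.le, hh.ge]
    have hpa : T.par (T.par^[m+d] t) = T.a := by rw [ha, T.par_root]
    have hh' : T.height (T.par^[m+d] t) = T.height (T.par^[m] t) := by
      rw [ha, ← hpa, hh]
    have h3 := ih hh'
    rw [hpa, ← ha, h3]

lemma corner_eq_of_lvl_eq (t : T.Γ) {m m'} (h : m ≤ m')
    (hl : T.lvl (T.par^[m'] t) = T.lvl (T.par^[m] t)) :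
    T.corner (T.par^[m'] t) = T.corner (T.par^[m] t) := by
  obtain ⟨d, rfl⟩ := Nat.exists_eq_add_of_le h
  clear h
  induction d with
  | zero => simp
  | succ d ih =>
    rw [show m + (d+1) = (m+d) + 1 by ring, Function.iterate_succ_apply'] at hl ⊢
    have h1 : T.lvl (T.par (T.par^[m+d] t)) ≤ T.lvl (T.par^[m+d] t) := lvl_par_le T _
    have h2 : T.lvl (T.par^[m+d] t) ≤ T.lvl (T.par^[m] t) := lvl_anc_le T t (by omega)
    have hle : T.lvl (T.par^[m+d] t) = T.lvl (T.par^[m] t) := by omega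
    have hc1 : T.corner (T.par (T.par^[m+d] t)) = T.corner (T.par^[m+d] t) := by
      by_cases hs : T.par^[m+d] t = T.a
      · rw [hs, T.par_root]
      · rcases step_lvl T _ hs with ⟨_, hc⟩ | ⟨hl', _⟩
        · exact hc.symm
        · omega
    rw [hc1, ih hle]

end WTaux
theorem stmt14 (n : ℕ) (hn : 2 ≤ n) (α K : ℝ) (hα : 0 < α) (hα1 : α ≤ 1) (hK : 0 < K)
    (φ : (Fin (n - 1) → ℝ) → ℝ)
    (hφH : ∀ x y : Fin (n - 1) → ℝ, (∀ i, |x i| < 3 / 2) → (∀ i, |y i| < 3 / 2) →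
      |φ x - φ y| ≤ K * dist x y ^ α)
    (hφlb : ∀ x, 2 ≤ φ x) (hφub : ∀ x, φ x < 3) :
    ∃ C : ℝ, 0 < C ∧
      ∀ (T : WhitneyTree n φ) (t : T.Γ) (i : ℕ),
        (({r : T.Γ | treeLe T.par r t ∧ T.lvl r = i}.ncard : ℝ)) ≤
          C * 2 ^ ((i : ℝ) * (1 - α)) := by
  refine ⟨4 * K + 5, by linarith, ?_⟩
  intro T t i
  set S : Set T.Γ := {r : T.Γ | treeLe T.par r t ∧ T.lvl r = i} with hSdef
  have hmemS : ∀ r, r ∈ S ↔ (∃ m : ℕ, T.par^[m] t = r) ∧ T.lvl r = i := by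
    intro r; rw [hSdef]; rfl
  have hX1 : (1:ℝ) ≤ (2:ℝ) ^ ((i : ℝ) * (1 - α)) := by
    rw [← Real.rpow_zero 2]
    exact Real.rpow_le_rpow_of_exponent_le one_le_two
      (mul_nonneg (Nat.cast_nonneg i) (by linarith))
  rcases S.eq_empty_or_nonempty with he | ⟨s₁, hs₁⟩
  · rw [he]
    simp only [Set.ncard_empty, Nat.cast_zero]
    positivity
  obtain ⟨⟨m₁, hm₁⟩, hl₁⟩ := (hmemS s₁).mp hs₁
  -- the lattice index of a cube at level i
  set g : T.Γ → ℕ := fun s => ⌊T.height s * 2 ^ i⌋₊ with hgdef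
  have hpow : (2:ℝ) ^ (-(i:ℤ)) * 2 ^ i = 1 := by
    rw [zpow_neg, zpow_natCast]
    field_simp
  have hkey : ∀ s ∈ S, T.height s = (g s : ℝ) * (2:ℝ) ^ (-(i:ℤ)) := by
    intro s hs
    obtain ⟨j, hj⟩ := WTaux.height_lattice T s
    rw [((hmemS s).mp hs).2] at hj
    have h2 : T.height s * 2 ^ i = j := by
      rw [hj, mul_assoc, hpow, mul_one]
    have h3 : g s = j := by rw [hgdef]; simp only []; rw [h2, Nat.floor_natCast]
    rw [h3, hj]
  have hinj : Set.InjOn g S := by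
    intro r hr r' hr' hgr
    have hh : T.height r = T.height r' := by
      rw [hkey r hr, hkey r' hr', hgr]
    obtain ⟨m, hm⟩ := ((hmemS r).mp hr).1
    obtain ⟨m', hm'⟩ := ((hmemS r').mp hr').1
    rcases le_total m m' with h | h
    · rw [← hm, ← hm']
      exact (WTaux.height_inj_aux T t h (by rw [hm, hm']; exact hh.symm)).symm
    · rw [← hm, ← hm']
      exact WTaux.height_inj_aux T t h (by rw [hm, hm']; exact hh)
  rcases Nat.eq_zero_or_pos i with hi0 | hi1
  · -- level 0 : at most two cubes
    subst hi0
    have hup0 : ∀ s ∈ S, g s < 2 := by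
      intro s hs
      have hb := T.below_graph s (T.corner s)
        (fun j => ⟨le_refl _, le_add_of_nonneg_right (by positivity)⟩)
      have h3 := hφub (T.corner s)
      rw [((hmemS s).mp hs).2] at hb
      have hk := hkey s hs
      simp only [Nat.cast_zero, neg_zero, zpow_zero, mul_one] at hb hk
      rw [hk] at hb
      have : (g s : ℝ) < 2 := by linarith
      exact_mod_cast this
    have hsub : g '' S ⊆ ↑(Finset.range 2) := by
      rintro _ ⟨s, hs, rfl⟩
      simp only [Finset.coe_range, Set.mem_Iio]
      exact hup0 s hs
    have hcard : S.ncard ≤ 2 := by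
      rw [← Set.ncard_image_of_injOn hinj]
      calc (g '' S).ncard ≤ (↑(Finset.range 2) : Set ℕ).ncard :=
            Set.ncard_le_ncard hsub (Finset.finite_toSet _)
        _ = 2 := by rw [Set.ncard_coe_finset, Finset.card_range]
      
    have : (S.ncard : ℝ) ≤ 2 := by exact_mod_cast hcard
    nlinarith [hX1]
  · -- level i ≥ 1
    obtain ⟨M₀, hM₀⟩ := T.reaches t
    have hbnd : ∀ m, T.lvl (T.par^[m] t) = i → m < M₀ := by
      intro m hm
      by_contra h
      push_neg at h
      obtain ⟨d, rfl⟩ := Nat.exists_eq_add_of_le h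
      rw [add_comm, Function.iterate_add_apply, hM₀,
        Function.iterate_fixed T.par_root, T.lvl_root] at hm
      omega
    set P : ℕ → Prop := fun m => T.lvl (T.par^[m] t) = i with hPdef
    have hPm₁ : P m₁ := by rw [hPdef]; simp only []; rw [hm₁]; exact hl₁
    set m₀ : ℕ := Nat.findGreatest P M₀ with hm₀def
    have hPm₀ : P m₀ := Nat.findGreatest_spec (le_of_lt (hbnd m₁ (by rw [hm₁]; exact hl₁))) hPm₁
    have hmax : ∀ m, P m → m ≤ m₀ := fun m hm =>
      Nat.le_findGreatest (le_of_lt (hbnd m hm)) hm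
    set s₀ : T.Γ := T.par^[m₀] t with hs₀def
    have hls₀ : T.lvl s₀ = i := hPm₀
    have hs₀S : s₀ ∈ S := (hmemS s₀).mpr ⟨⟨m₀, rfl⟩, hls₀⟩
    have hmin_height : ∀ s ∈ S, T.height s₀ ≤ T.height s := by
      intro s hs
      obtain ⟨m, hm⟩ := ((hmemS s).mp hs).1
      have hmm : m ≤ m₀ := hmax m (by rw [hPdef]; simp only []; rw [hm]; exact ((hmemS s).mp hs).2)
      rw [← hm]
      exact WTaux.height_anc_le T t hmm
    have hcorner : ∀ s ∈ S, T.corner s = T.corner s₀ := by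
      intro s hs
      obtain ⟨m, hm⟩ := ((hmemS s).mp hs).1
      have hmm : m ≤ m₀ := hmax m (by rw [hPdef]; simp only []; rw [hm]; exact ((hmemS s).mp hs).2)
      rw [← hm]
      exact (WTaux.corner_eq_of_lvl_eq T t hmm
        (by rw [hm]; rw [hls₀, ((hmemS s).mp hs).2])).symm
    set p : T.Γ := T.par s₀ with hpdef
    have hp : T.par^[m₀+1] t = p := by
      rw [Function.iterate_succ_apply']
    have hs₀a : s₀ ≠ T.a := by
      intro h
      rw [h, T.lvl_root] at hls₀
      omega
    have hlp : T.lvl p ≠ i := by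
      intro h
      have : m₀ + 1 ≤ m₀ := hmax (m₀+1) (by rw [hPdef]; simp only []; rw [hp]; exact h)
      omega
    have hncont : ¬ tripled n (T.corner p) (T.height p)
        ((2:ℝ) ^ (-(T.lvl p : ℤ))) ⊆ OmegaE n φ := by
      intro hcont
      exact hlp (by rw [← (T.child_translate s₀ hs₀a hcont).1]; exact hls₀)
    obtain ⟨hlsp, hcsp, hhsp⟩ := T.child_split s₀ hs₀a hncont
    have hiL : i = T.lvl p + 1 := by rw [← hls₀, hlsp]
    set ℓ : ℝ := (2:ℝ) ^ (-(T.lvl p : ℤ)) with hℓdef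
    have hℓpos : 0 < ℓ := by positivity
    have hℓ1 : ℓ ≤ 1 := by
      rw [hℓdef]
      exact zpow_le_one_of_nonpos₀ one_le_two (by omega)
    have hhalf : (2:ℝ) ^ (-(i:ℤ)) = ℓ / 2 := by
      rw [hℓdef, hiL]
      rw [show (-(((T.lvl p + 1 : ℕ)):ℤ)) = (-(T.lvl p : ℤ)) - 1 by push_cast; ring]
      rw [zpow_sub₀ (two_ne_zero)]
      norm_num
    obtain ⟨x, hxT, hxO⟩ := Set.not_subset.mp hncont
    simp only [tripled, Set.mem_setOf_eq] at hxT
    obtain ⟨hx1, hx2a, hx2b⟩ := hxT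
    have hx1abs : ∀ j, |x.1 j| < 3/2 := by
      intro j
      obtain ⟨hc1, hc2⟩ := WTaux.corner_mem T p j
      obtain ⟨ha', hb'⟩ := hx1 j
      rw [← hℓdef] at hc2
      rw [abs_lt]
      constructor <;> nlinarith
    have hx2pos : 0 < x.2 := lt_of_le_of_lt (WTaux.height_nonneg T p) hx2a
    have hφx : φ x.1 ≤ x.2 := by
      by_contra h
      push_neg at h
      exact hxO ⟨hx1abs, hx2pos, h⟩
    have hcabs : ∀ j, |T.corner s₀ j| < 3/2 := by
      intro j
      obtain ⟨h1', h2'⟩ := WTaux.corner_mem T s₀ j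
      have hq : (0:ℝ) < (2:ℝ)^(-(T.lvl s₀:ℤ)) := by positivity
      rw [abs_lt]
      constructor <;> nlinarith
    have he2 : (2:ℝ) ^ (-(T.lvl s₀ : ℤ)) = ℓ / 2 := by rw [hls₀]; exact hhalf
    have hdist : dist x.1 (T.corner s₀) ≤ 2 * ℓ := by
      rw [dist_pi_le_iff (by positivity)]
      intro j
      obtain ⟨ha', hb'⟩ := hx1 j
      rcases hcsp j with h | h <;>
        rw [Real.dist_eq, h, abs_le] <;>
        constructor <;> first
          | linarith
          | (rw [he2] at *; linarith [he2 ▸ (le_refl (0:ℝ))])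
    have hHold := hφH (T.corner s₀) x.1 hcabs hx1abs
    have hrp : dist (T.corner s₀) x.1 ^ α ≤ (2*ℓ) ^ α :=
      Real.rpow_le_rpow dist_nonneg (by rw [dist_comm]; exact hdist) hα.le
    have hrpnn : (0:ℝ) ≤ (2*ℓ) ^ α := Real.rpow_nonneg (by linarith) α
    have hlow : φ (T.corner s₀) - K * (2*ℓ)^α - 2*ℓ ≤ T.height s₀ := by
      have h1 : φ (T.corner s₀) - φ x.1 ≤ K * (2*ℓ)^α := by
        calc φ (T.corner s₀) - φ x.1 ≤ |φ (T.corner s₀) - φ x.1| := le_abs_self _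
          _ ≤ K * dist (T.corner s₀) x.1 ^ α := hHold
          _ ≤ K * (2*ℓ)^α := by
              exact mul_le_mul_of_nonneg_left hrp hK.le
      linarith [hhsp]
    have hup : ∀ s ∈ S, T.height s + ℓ/2 ≤ φ (T.corner s₀) := by
      intro s hs
      have hb := T.below_graph s (T.corner s)
        (fun j => ⟨le_refl _, le_add_of_nonneg_right (by positivity)⟩)
      rw [hcorner s hs] at hb
      have he3 : (2:ℝ)^(-(T.lvl s : ℤ)) = ℓ/2 := by rw [((hmemS s).mp hs).2]; exact hhalf
      rw [he3] at hb
      exact hb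
    have hgub : ∀ s ∈ S, (g s : ℝ) ≤ (g s₀ : ℝ) + (K * (2*ℓ)^α + 2*ℓ) * 2^i := by
      intro s hs
      have h1 := hkey s hs
      have h0 := hkey s₀ hs₀S
      have h2 := hup s hs
      have hd : (g s : ℝ) * (2:ℝ)^(-(i:ℤ)) ≤ (g s₀:ℝ) * (2:ℝ)^(-(i:ℤ)) + (K*(2*ℓ)^α + 2*ℓ) := by
        rw [← h1, ← h0]
        linarith [hlow, hup s hs]
      calc (g s : ℝ) = ((g s:ℝ) * ((2:ℝ)^(-(i:ℤ)))) * 2^i := by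
            rw [mul_assoc, hpow, mul_one]
        _ ≤ ((g s₀:ℝ) * (2:ℝ)^(-(i:ℤ)) + (K*(2*ℓ)^α + 2*ℓ)) * 2^i := by
            apply mul_le_mul_of_nonneg_right hd (by positivity)
        _ = (g s₀:ℝ) * ((2:ℝ)^(-(i:ℤ)) * 2^i) + (K*(2*ℓ)^α + 2*ℓ) * 2^i := by ring
        _ = (g s₀ : ℝ) + (K * (2*ℓ)^α + 2*ℓ) * 2^i := by rw [hpow, mul_one]
    have hglb : ∀ s ∈ S, g s₀ ≤ g s := by
      intro s hs
      have hmh := hmin_height s hs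
      rw [hkey s hs, hkey s₀ hs₀S] at hmh
      have hp2 : (0:ℝ) < (2:ℝ)^(-(i:ℤ)) := by positivity
      have := le_of_mul_le_mul_right hmh hp2
      exact_mod_cast this
    set R : ℝ := (K * (2*ℓ)^α + 2*ℓ) * 2^i with hRdef
    have hR0 : 0 ≤ R := by positivity
    set N : ℕ := ⌊R⌋₊ + 1 with hNdef
    have hsub : g '' S ⊆ ↑(Finset.Ico (g s₀) (g s₀ + N)) := by
      rintro _ ⟨s, hs, rfl⟩
      simp only [Finset.coe_Ico, Set.mem_Ico]
      refine ⟨hglb s hs, ?_⟩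
      have h1 := hgub s hs
      have h2 : g s ≤ ⌊R + (g s₀:ℝ)⌋₊ := Nat.le_floor (by linarith)
      rw [Nat.floor_add_natCast hR0] at h2
      omega
    have hcard : S.ncard ≤ N := by
      rw [← Set.ncard_image_of_injOn hinj]
      calc (g '' S).ncard ≤ (↑(Finset.Ico (g s₀) (g s₀ + N)) : Set ℕ).ncard :=
            Set.ncard_le_ncard hsub (Finset.finite_toSet _)
        _ = N := by rw [Set.ncard_coe_finset, Nat.card_Ico]; omega
    have hNR : (N : ℝ) ≤ R + 1 := by
      rw [hNdef]
      push_cast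
      linarith [Nat.floor_le hR0]
    clear_value N R ℓ p s₀ m₀ g S
    -- bound R by the target
    have h2ℓ : 2 * ℓ = 4 * (2:ℝ)^(-(i:ℤ)) := by rw [hhalf]; ring
    have hmain : (2*ℓ)^α * 2^i ≤ 4 * (2:ℝ) ^ ((i:ℝ)*(1-α)) := by
      rw [h2ℓ]
      have e1 : ((2:ℝ)^(-(i:ℤ))) = (2:ℝ) ^ (-(i:ℝ)) := by
        rw [← Real.rpow_intCast 2 (-(i:ℤ))]
        push_cast
        ring_nf
      have e2 : ((2:ℝ)^(i:ℕ)) = (2:ℝ) ^ ((i:ℝ)) := by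
        rw [← Real.rpow_natCast 2 i]
      rw [e1, e2]
      rw [Real.mul_rpow (by norm_num) (Real.rpow_nonneg (by norm_num) _)]
      have e3 : ((2:ℝ) ^ (-(i:ℝ))) ^ α = (2:ℝ) ^ ((-(i:ℝ)) * α) := by
        rw [← Real.rpow_mul (by norm_num)]
      rw [e3, mul_assoc, ← Real.rpow_add (by norm_num)]
      have e4 : (-(i:ℝ)) * α + (i:ℝ) = (i:ℝ) * (1-α) := by ring
      rw [e4]
      have h4 : (4:ℝ)^α ≤ 4 := by
        calc (4:ℝ)^α ≤ (4:ℝ)^(1:ℝ) :=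
              Real.rpow_le_rpow_of_exponent_le (by norm_num) hα1
          _ = 4 := Real.rpow_one 4
      exact mul_le_mul_of_nonneg_right h4 (Real.rpow_nonneg (by norm_num) _)
    have hRb : R ≤ 4*K * (2:ℝ) ^ ((i:ℝ)*(1-α)) + 4 := by
      rw [hRdef]
      have h5 : 2*ℓ * 2^i = 4 := by
        rw [h2ℓ, mul_assoc, hpow, mul_one]
      have h6 : K * (2*ℓ)^α * 2^i ≤ K * (4 * (2:ℝ) ^ ((i:ℝ)*(1-α))) := by
        rw [mul_assoc]
        exact mul_le_mul_of_nonneg_left hmain hK.le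
      have h7 : (K * (2*ℓ)^α + 2*ℓ) * 2^i = K*(2*ℓ)^α*2^i + 2*ℓ*2^i := by ring
      rw [h7, h5]
      linarith [h6]
    have hfin : (S.ncard : ℝ) ≤ (N : ℝ) := by exact_mod_cast hcard
    have h8 : (5:ℝ) * 1 ≤ 5 * (2:ℝ) ^ ((i:ℝ)*(1-α)) := by linarith
    have h9 : (4*K+5) * (2:ℝ) ^ ((i:ℝ)*(1-α)) =
        4*K*(2:ℝ) ^ ((i:ℝ)*(1-α)) + 5*(2:ℝ) ^ ((i:ℝ)*(1-α)) := by ring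
    linarith
end
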